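/- arXiv:2509.13996 — 3 statements merged into one kernel-verified Lean document; each statement's English description precedes it below -/
import Mathlib

section
/- For every integer n ∈ ℤ, the function r_n : ℝ → ℂ defined by r_n(ξ) := ((ξ − i)/(ξ + i))^n has total variation V(r_n) = 2π|n| over ℝ. -/
open MeasureTheory Set

private lemma rn_cos (ξ : ℝ) :
    Real.cos (2 * Real.arctan ξ) = (1 - ξ ^ 2) / (1 + ξ ^ 2) := by
  have h0 : (0:ℝ) < 1 + ξ ^ 2 := by positivity
  rw [Real.cos_two_mul, Real.cos_arctan]
  rw [div_pow, one_pow, Real.sq_sqrt h0.le]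
  field_simp
  ring

private lemma rn_sin (ξ : ℝ) :
    Real.sin (2 * Real.arctan ξ) = 2 * ξ / (1 + ξ ^ 2) := by
  have h0 : (0:ℝ) < 1 + ξ ^ 2 := by positivity
  have hs : Real.sqrt (1 + ξ ^ 2) * Real.sqrt (1 + ξ ^ 2) = 1 + ξ ^ 2 :=
    Real.mul_self_sqrt h0.le
  rw [Real.sin_two_mul, Real.sin_arctan, Real.cos_arctan]
  have hs0 : Real.sqrt (1 + ξ ^ 2) ≠ 0 := by positivity
  field_simp
  rw [Real.sq_sqrt h0.le]

private lemma rn_base (ξ : ℝ) :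
    ((ξ : ℂ) - Complex.I) / ((ξ : ℂ) + Complex.I)
      = Complex.exp ((↑(Real.pi + 2 * Real.arctan ξ) : ℂ) * Complex.I) := by
  have h1 : ((ξ:ℂ) + Complex.I) ≠ 0 := by
    intro h
    have := congrArg Complex.im h
    simp at this
  have h0 : (1 : ℝ) + ξ ^ 2 ≠ 0 := by positivity
  rw [Complex.exp_mul_I, ← Complex.ofReal_cos, ← Complex.ofReal_sin,
    Real.cos_add, Real.sin_add, Real.cos_pi, Real.sin_pi, rn_cos, rn_sin]
  rw [div_eq_iff h1]
  push_cast
  have h0' : (1 : ℂ) + (ξ:ℂ) ^ 2 ≠ 0 := by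
    exact_mod_cast (Complex.ofReal_ne_zero.2 h0)
  field_simp
  ring_nf
  rw [Complex.I_sq]
  ring

private noncomputable def gfun (n : ℤ) : ℝ → ℝ :=
  fun ξ => (n : ℝ) * (Real.pi + 2 * Real.arctan ξ)

private lemma rn_eq (n : ℤ) (ξ : ℝ) :
    (((ξ : ℂ) - Complex.I) / ((ξ : ℂ) + Complex.I)) ^ n
      = Complex.exp ((↑(gfun n ξ) : ℂ) * Complex.I) := by
  rw [rn_base, ← Complex.exp_int_mul]
  congr 1
  simp only [gfun]
  push_cast
  ring

private lemma lip_expI : LipschitzWith 1 (fun t : ℝ => Complex.exp ((t:ℂ) * Complex.I)) := by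
  have hd : ∀ t : ℝ, HasDerivAt (fun t : ℝ => Complex.exp ((t:ℂ) * Complex.I))
      (Complex.exp ((t:ℂ) * Complex.I) * Complex.I) t := by
    intro t
    have h1 : HasDerivAt (fun t : ℝ => ((t:ℂ) * Complex.I)) Complex.I t := by
      simpa using (Complex.ofRealCLM.hasDerivAt (x := t)).mul_const Complex.I
    exact h1.cexp
  apply lipschitzWith_of_nnnorm_deriv_le (fun t => (hd t).differentiableAt)
  intro t
  rw [(hd t).deriv, ← NNReal.coe_le_coe]
  simp [coe_nnnorm, map_mul, Complex.norm_exp_ofReal_mul_I]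

private lemma chord (a b : ℝ) :
    dist (Complex.exp ((a:ℂ) * Complex.I)) (Complex.exp ((b:ℂ) * Complex.I))
      = 2 * |Real.sin ((a - b) / 2)| := by
  rw [Complex.dist_eq, Complex.exp_mul_I, Complex.exp_mul_I,
    ← Complex.ofReal_cos, ← Complex.ofReal_sin, ← Complex.ofReal_cos, ← Complex.ofReal_sin]
  have h : ((Real.cos a : ℂ) + (Real.sin a : ℂ) * Complex.I)
        - ((Real.cos b : ℂ) + (Real.sin b : ℂ) * Complex.I)
      = (↑(Real.cos a - Real.cos b) : ℂ) + (↑(Real.sin a - Real.sin b) : ℂ) * Complex.I := by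
    push_cast; ring
  rw [h, Complex.norm_add_mul_I, Real.cos_sub_cos, Real.sin_sub_sin]
  have h2 : (-2 * Real.sin ((a + b) / 2) * Real.sin ((a - b) / 2)) ^ 2
      + (2 * Real.sin ((a - b) / 2) * Real.cos ((a + b) / 2)) ^ 2
      = (2 * |Real.sin ((a - b) / 2)|) ^ 2 := by
    have hpc := Real.sin_sq_add_cos_sq ((a + b) / 2)
    have habs := sq_abs (Real.sin ((a - b) / 2))
    nlinarith [hpc, habs]
  rw [h2, Real.sqrt_sq (by positivity)]

private lemma gvar (n : ℤ) :
    eVariationOn (gfun n) Set.univ ≤ ENNReal.ofReal (2 * Real.pi * |(n : ℝ)|) := by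
  apply iSup_le
  rintro ⟨m, ⟨u, hu, -⟩⟩
  have key : ∀ i : ℕ, edist (gfun n (u (i+1))) (gfun n (u i))
      = ENNReal.ofReal (2 * |(n:ℝ)| * (Real.arctan (u (i+1)) - Real.arctan (u i))) := by
    intro i
    have hmono : Real.arctan (u i) ≤ Real.arctan (u (i+1)) :=
      Real.arctan_strictMono.monotone (hu (Nat.le_succ i))
    rw [edist_dist, Real.dist_eq]
    congr 1
    have h1 : gfun n (u (i+1)) - gfun n (u i)
        = (n:ℝ) * (2 * (Real.arctan (u (i+1)) - Real.arctan (u i))) := by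
      simp only [gfun]; ring
    rw [h1, abs_mul, abs_of_nonneg (by linarith : (0:ℝ) ≤ 2 * (Real.arctan (u (i+1)) - Real.arctan (u i)))]
    ring
  calc (∑ i ∈ Finset.range m, edist (gfun n (u (i+1))) (gfun n (u i)))
      = ENNReal.ofReal (∑ i ∈ Finset.range m,
          2 * |(n:ℝ)| * (Real.arctan (u (i+1)) - Real.arctan (u i))) := by
        rw [ENNReal.ofReal_sum_of_nonneg]
        · exact Finset.sum_congr rfl fun i _ => key i
        · intro i _
          have hmono : Real.arctan (u i) ≤ Real.arctan (u (i+1)) :=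
            Real.arctan_strictMono.monotone (hu (Nat.le_succ i))
          exact mul_nonneg (by positivity) (by linarith)
    _ ≤ ENNReal.ofReal (2 * Real.pi * |(n:ℝ)|) := by
        apply ENNReal.ofReal_le_ofReal
        rw [← Finset.mul_sum, Finset.sum_range_sub (fun i => Real.arctan (u i))]
        have h1 := Real.arctan_lt_pi_div_two (u m)
        have h2 := Real.neg_pi_div_two_lt_arctan (u 0)
        have h3 : (0:ℝ) ≤ |(n:ℝ)| := abs_nonneg _
        nlinarith

open Filter Topology in
/-- For every integer `n`, the function `r_n(ξ) = ((ξ − i)/(ξ + i))^n` has total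
variation `V(r_n) = 2π|n|` over `ℝ`. -/
theorem eVariationOn_rn (n : ℤ) :
    eVariationOn (fun ξ : ℝ => (((ξ : ℂ) - Complex.I) / ((ξ : ℂ) + Complex.I)) ^ n)
      Set.univ = ENNReal.ofReal (2 * Real.pi * |(n : ℝ)|) := by
  set f : ℝ → ℂ := fun ξ : ℝ => (((ξ : ℂ) - Complex.I) / ((ξ : ℂ) + Complex.I)) ^ n with hf
  have hfg : f = (fun t : ℝ => Complex.exp ((t:ℂ) * Complex.I)) ∘ gfun n := by
    funext ξ; exact rn_eq n ξ
  have up : eVariationOn f Set.univ ≤ ENNReal.ofReal (2 * Real.pi * |(n:ℝ)|) := by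
    calc eVariationOn f Set.univ
        ≤ (1 : ENNReal) * eVariationOn (gfun n) Set.univ := by
          rw [hfg]
          simpa using
            lip_expI.lipschitzOnWith.comp_eVariationOn_le (mapsTo_univ _ _)
      _ = eVariationOn (gfun n) Set.univ := one_mul _
      _ ≤ _ := gvar n
  refine le_antisymm up ?_
  rcases eq_or_ne n 0 with rfl | hn
  · simp
  · set K : ℝ := |(n:ℝ)| with hK
    have hK0 : 0 < K := abs_pos.2 (by exact_mod_cast hn)
    have hπ := Real.pi_pos
    set a : ℕ → ℝ := fun m => 2 * m * Real.sin (K * (Real.pi / (m + 2))) with ha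
    have hsum : ∀ m : ℕ, n.natAbs ≤ m → ENNReal.ofReal (a m) ≤ eVariationOn f Set.univ := by
      intro m hm
      set h : ℝ := Real.pi / (m + 2) with hh
      have hhpos : 0 < h := by positivity
      set t : ℕ → ℝ := fun j => -(Real.pi/2) + (j+1) * h with ht
      have tmem : ∀ j : ℕ, j ≤ m → t j ∈ Set.Ioo (-(Real.pi/2)) (Real.pi/2) := by
        intro j hj
        constructor
        · have : (0:ℝ) < ((j:ℝ)+1) * h := by positivity
          simp only [ht]; linarith
        · have hjm : ((j:ℝ)+1) < (m:ℝ)+2 := by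
            have : (j:ℝ) ≤ (m:ℝ) := by exact_mod_cast hj
            linarith
          have h1 : ((j:ℝ)+1) * h < Real.pi := by
            calc ((j:ℝ)+1)*h < ((m:ℝ)+2)*h := mul_lt_mul_of_pos_right hjm hhpos
              _ = Real.pi := by rw [hh]; field_simp
          simp only [ht]; linarith
      set u : ℕ → ℝ := fun j => Real.tan (t (min j m)) with hu
      have tmono : ∀ i j : ℕ, i ≤ j → t (min i m) ≤ t (min j m) := by
        intro i j hij
        have hmin : min i m ≤ min j m := min_le_min hij le_rfl
        have hmin' : ((min i m : ℕ):ℝ) ≤ ((min j m : ℕ):ℝ) := by exact_mod_cast hmin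
        simp only [ht]
        nlinarith
      have umono : Monotone u := by
        intro i j hij
        exact Real.strictMonoOn_tan.monotoneOn
          (tmem _ (min_le_right _ _)) (tmem _ (min_le_right _ _)) (tmono i j hij)
      have harctan : ∀ j : ℕ, Real.arctan (u j) = t (min j m) := by
        intro j
        have hm2 := tmem (min j m) (min_le_right _ _)
        exact Real.arctan_tan hm2.1 hm2.2
      have hKnat : K = (n.natAbs : ℝ) := by
        rw [hK, Nat.cast_natAbs, Int.cast_abs]
      have hKh1 : K * h ≤ Real.pi := by
        have hle : K ≤ (m:ℝ) + 2 := by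
          rw [hKnat]
          have : (n.natAbs : ℝ) ≤ (m:ℝ) := by exact_mod_cast hm
          linarith
        calc K * h ≤ ((m:ℝ)+2) * h := mul_le_mul_of_nonneg_right hle hhpos.le
          _ = Real.pi := by rw [hh]; field_simp
      have hsinnn : 0 ≤ Real.sin (K * h) :=
        Real.sin_nonneg_of_nonneg_of_le_pi (by positivity) hKh1
      have hterm : ∀ i ∈ Finset.range m,
          edist (f (u (i+1))) (f (u i)) = ENNReal.ofReal (2 * Real.sin (K * h)) := by
        intro i hi
        rw [Finset.mem_range] at hi
        have hmin1 : min (i+1) m = i+1 := min_eq_left (by omega)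
        have hmin0 : min i m = i := min_eq_left (by omega)
        rw [edist_dist, hf]
        simp only
        rw [rn_eq, rn_eq, chord]
        congr 1
        have hdiff : (gfun n (u (i+1)) - gfun n (u i)) / 2 = (n:ℝ) * h := by
          simp only [gfun]
          rw [harctan, harctan, hmin1, hmin0]
          simp only [ht]
          push_cast
          ring
        rw [hdiff]
        have hcase : (n:ℝ) * h = K * h ∨ (n:ℝ) * h = -(K * h) := by
          rcases abs_cases ((n:ℝ)) with ⟨h1, _⟩ | ⟨h1, _⟩
          · left; rw [hK, h1]
          · right; rw [hK, h1]; ring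
        rcases hcase with hc | hc
        · rw [hc, abs_of_nonneg hsinnn]
        · rw [hc, Real.sin_neg, abs_neg, abs_of_nonneg hsinnn]
      calc ENNReal.ofReal (a m)
          = ∑ i ∈ Finset.range m, edist (f (u (i+1))) (f (u i)) := by
            rw [Finset.sum_congr rfl hterm, Finset.sum_const, Finset.card_range, nsmul_eq_mul,
              ← ENNReal.ofReal_natCast m, ← ENNReal.ofReal_mul (Nat.cast_nonneg m)]
            congr 1
            simp only [ha, hh]
            ring
        _ ≤ eVariationOn f Set.univ := eVariationOn.sum_le (f := f) (n := m) umono (fun i => mem_univ _)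
    have hx : Tendsto (fun m : ℕ => K * (Real.pi / ((m:ℝ)+2))) atTop (𝓝[≠] (0:ℝ)) := by
      rw [tendsto_nhdsWithin_iff]
      constructor
      · have h2 : Tendsto (fun m : ℕ => ((m:ℝ)+2)) atTop atTop :=
          tendsto_atTop_add_const_right _ _ tendsto_natCast_atTop_atTop
        have h3 := h2.inv_tendsto_atTop
        have h4 := h3.const_mul (K * Real.pi)
        rw [mul_zero] at h4
        apply h4.congr
        intro m
        simp only [Pi.inv_apply]
        rw [div_eq_mul_inv]
        ring
      · filter_upwards with m
        have : 0 < K * (Real.pi / ((m:ℝ)+2)) := by positivity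
        exact mem_compl_singleton_iff.mpr this.ne'
    have hslope : Tendsto (fun y : ℝ => Real.sin y / y) (𝓝[≠] (0:ℝ)) (𝓝 1) := by
      have hds := Real.hasDerivAt_sin 0
      rw [hasDerivAt_iff_tendsto_slope] at hds
      rw [Real.cos_zero] at hds
      apply hds.congr
      intro y
      simp [slope_fun_def]
      ring
    have hc : Tendsto (fun m : ℕ =>
        Real.sin (K * (Real.pi / ((m:ℝ)+2))) / (K * (Real.pi / ((m:ℝ)+2))))
        atTop (𝓝 1) := hslope.comp hx
    have hb : Tendsto (fun m : ℕ => (m:ℝ)/((m:ℝ)+2)) atTop (𝓝 1) :=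
      tendsto_natCast_div_add_atTop (2:ℝ)
    have hA : Tendsto a atTop (𝓝 (2 * Real.pi * K)) := by
      have hmul := (hb.mul hc).const_mul (2 * Real.pi * K)
      rw [mul_one, mul_one] at hmul
      apply hmul.congr
      intro m
      have hx0 : K * (Real.pi / ((m:ℝ)+2)) ≠ 0 := by positivity
      have hm2 : ((m:ℝ)+2) ≠ 0 := by positivity
      simp only [ha]
      field_simp
    have hofReal : Tendsto (fun m => ENNReal.ofReal (a m)) atTop
        (𝓝 (ENNReal.ofReal (2 * Real.pi * K))) :=
      (ENNReal.continuous_ofReal.tendsto _).comp hA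
    exact le_of_tendsto hofReal (eventually_atTop.2 ⟨n.natAbs, hsum⟩)
end

section
/- Let A be the unital ℂ-algebra (under pointwise operations) of all functions a : ℝ → ℂ that are continuous, have bounded variation on ℝ, and whose limits at +∞ and −∞ exist in ℂ and are equal. If φ : A → ℂ is a unital ℂ-algebra homomorphism that is bounded with respect to the norm ‖a‖ := sup_{x∈ℝ}|a(x)| + V(a) (i.e., there is C > 0 with |φ(a)| ≤ C‖a‖ for all a ∈ A), then either there exists x₀ ∈ ℝ such that φ(a) = a(x₀) for all a ∈ A, or φ(a) = lim_{x→+∞} a(x) for all a ∈ A. In other words, every character of the Banach algebra BV(ℝ) ∩ C(Ṙ) is an evaluation functional δ_x for some x in the one-point compactification Ṙ = ℝ ∪ {∞}. -/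
open MeasureTheory Filter

noncomputable section

open scoped ENNReal NNReal ComplexConjugate Real

/-- Membership in the algebra `A = BV(ℝ) ∩ C(Ṙ)`: `a` is continuous, has bounded
variation on `ℝ`, and has equal finite limits at `+∞` and `−∞`. -/
def MemBVCRdot (a : ℝ → ℂ) : Prop :=
  Continuous a ∧ BoundedVariationOn a Set.univ ∧
    ∃ L : ℂ, Tendsto a atTop (nhds L) ∧ Tendsto a atBot (nhds L)

/-- The norm `‖a‖ = sup_{x ∈ ℝ} |a(x)| + V(a)` of the Banach algebra `BV(ℝ) ∩ C(Ṙ)`. -/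
def bvNorm (a : ℝ → ℂ) : ℝ :=
  (⨆ x : ℝ, ‖a x‖) + (eVariationOn a Set.univ).toReal

namespace BVchar

lemma evar_le_two {f g h : ℝ → ℂ} {C D : ℝ≥0∞}
    (hpt : ∀ x y : ℝ, edist (f x) (f y) ≤ C * edist (g x) (g y) + D * edist (h x) (h y)) :
    eVariationOn f Set.univ ≤ C * eVariationOn g Set.univ + D * eVariationOn h Set.univ := by
  apply iSup_le
  rintro ⟨n, ⟨u, hu, us⟩⟩
  calc (∑ i ∈ Finset.range n, edist (f (u (i + 1))) (f (u i)))
      ≤ ∑ i ∈ Finset.range n,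
          (C * edist (g (u (i+1))) (g (u i)) + D * edist (h (u (i+1))) (h (u i))) :=
        Finset.sum_le_sum fun i _ => hpt _ _
    _ = C * (∑ i ∈ Finset.range n, edist (g (u (i+1))) (g (u i)))
        + D * (∑ i ∈ Finset.range n, edist (h (u (i+1))) (h (u i))) := by
        rw [Finset.sum_add_distrib, Finset.mul_sum, Finset.mul_sum]
    _ ≤ _ := add_le_add (mul_le_mul_right (eVariationOn.sum_le hu us) _)
        (mul_le_mul_right (eVariationOn.sum_le hu us) _)

lemma bv_le_two {f g h : ℝ → ℂ} {C D : ℝ≥0}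
    (hpt : ∀ x y : ℝ, ‖f x - f y‖₊ ≤ C * ‖g x - g y‖₊ + D * ‖h x - h y‖₊)
    (hg : BoundedVariationOn g Set.univ) (hh : BoundedVariationOn h Set.univ) :
    BoundedVariationOn f Set.univ := by
  apply ne_top_of_le_ne_top
    (show (C : ℝ≥0∞) * eVariationOn g Set.univ + (D : ℝ≥0∞) * eVariationOn h Set.univ ≠ ⊤ from
      ENNReal.add_ne_top.2 ⟨ENNReal.mul_ne_top ENNReal.coe_ne_top hg,
        ENNReal.mul_ne_top ENNReal.coe_ne_top hh⟩)
  apply evar_le_two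
  intro x y
  rw [edist_nndist, edist_nndist, edist_nndist, nndist_eq_nnnorm, nndist_eq_nnnorm, nndist_eq_nnnorm,
    ← ENNReal.coe_mul, ← ENNReal.coe_mul, ← ENNReal.coe_add, ENNReal.coe_le_coe]
  exact hpt x y
lemma nnnorm_bound {a : ℝ → ℂ} (ha : MemBVCRdot a) : ∃ M : ℝ≥0, ∀ x, ‖a x‖₊ ≤ M := by
  refine ⟨‖a 0‖₊ + (eVariationOn a Set.univ).toNNReal, fun x => ?_⟩
  have h1 : ‖a x - a 0‖₊ ≤ (eVariationOn a Set.univ).toNNReal := by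
    have := eVariationOn.edist_le a (Set.mem_univ x) (Set.mem_univ 0)
    rw [edist_nndist, nndist_eq_nnnorm] at this
    exact (ENNReal.coe_le_iff.1 (this.trans_eq (ENNReal.coe_toNNReal ha.2.1).symm)) _ rfl
  calc ‖a x‖₊ = ‖a 0 + (a x - a 0)‖₊ := by rw [add_sub_cancel]
    _ ≤ ‖a 0‖₊ + ‖a x - a 0‖₊ := nnnorm_add_le _ _
    _ ≤ _ := add_le_add_right h1 _

lemma mem_const (c : ℂ) : MemBVCRdot (fun _ => c) := by
  refine ⟨continuous_const, ?_, c, tendsto_const_nhds, tendsto_const_nhds⟩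
  apply bv_le_two (g := fun _ => c) (h := fun _ => c) (C := 0) (D := 0) (fun x y => by simp) <;>
  · apply ne_top_of_le_ne_top (show (0:ℝ≥0∞) ≠ ⊤ by simp)
    apply iSup_le
    rintro ⟨n, ⟨u, hu, us⟩⟩
    simp

lemma mem_add {a b : ℝ → ℂ} (ha : MemBVCRdot a) (hb : MemBVCRdot b) : MemBVCRdot (a + b) := by
  obtain ⟨La, haT, haB⟩ := ha.2.2
  obtain ⟨Lb, hbT, hbB⟩ := hb.2.2
  refine ⟨ha.1.add hb.1, ?_, La + Lb, haT.add hbT, haB.add hbB⟩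
  apply bv_le_two (g := a) (h := b) (C := 1) (D := 1) ?_ ha.2.1 hb.2.1
  intro x y
  simp only [Pi.add_apply, one_mul]
  calc ‖a x + b x - (a y + b y)‖₊ = ‖(a x - a y) + (b x - b y)‖₊ := by ring_nf
    _ ≤ _ := nnnorm_add_le _ _

lemma mem_mul {a b : ℝ → ℂ} (ha : MemBVCRdot a) (hb : MemBVCRdot b) : MemBVCRdot (a * b) := by
  obtain ⟨La, haT, haB⟩ := ha.2.2
  obtain ⟨Lb, hbT, hbB⟩ := hb.2.2
  obtain ⟨Ma, hMa⟩ := nnnorm_bound ha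
  obtain ⟨Mb, hMb⟩ := nnnorm_bound hb
  refine ⟨ha.1.mul hb.1, ?_, La * Lb, haT.mul hbT, haB.mul hbB⟩
  apply bv_le_two (g := a) (h := b) (C := Mb) (D := Ma) ?_ ha.2.1 hb.2.1
  intro x y
  simp only [Pi.mul_apply]
  calc ‖a x * b x - a y * b y‖₊ = ‖(a x - a y) * b y + a x * (b x - b y)‖₊ := by ring_nf
    _ ≤ ‖(a x - a y) * b y‖₊ + ‖a x * (b x - b y)‖₊ := nnnorm_add_le _ _
    _ = ‖a x - a y‖₊ * ‖b y‖₊ + ‖a x‖₊ * ‖b x - b y‖₊ := by rw [nnnorm_mul, nnnorm_mul]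
    _ ≤ ‖a x - a y‖₊ * Mb + Ma * ‖b x - b y‖₊ :=
        add_le_add (mul_le_mul_right (hMb y) _) (mul_le_mul_left (hMa x) _)
    _ = Mb * ‖a x - a y‖₊ + Ma * ‖b x - b y‖₊ := by rw [mul_comm]

lemma mem_conj {a : ℝ → ℂ} (ha : MemBVCRdot a) : MemBVCRdot (fun x => conj (a x)) := by
  obtain ⟨La, haT, haB⟩ := ha.2.2
  refine ⟨Complex.continuous_conj.comp ha.1, ?_, conj La,
    (Complex.continuous_conj.tendsto La).comp haT, (Complex.continuous_conj.tendsto La).comp haB⟩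
  apply bv_le_two (g := a) (h := a) (C := 1) (D := 0) ?_ ha.2.1 ha.2.1
  intro x y
  simp only [zero_mul, add_zero, one_mul, ← map_sub, ← nnnorm_star (a x - a y), RCLike.star_def]
  exact le_refl _

lemma mem_inv {b : ℝ → ℂ} (hb : MemBVCRdot b) {m : ℝ≥0} (hm0 : 0 < m)
    (hm : ∀ x, m ≤ ‖b x‖₊) : MemBVCRdot (fun x => (b x)⁻¹) := by
  have bne : ∀ x, b x ≠ 0 := fun x hx => by
    have := hm x; rw [hx] at this; simp at this; exact absurd this hm0.ne'
  obtain ⟨L, hT, hB⟩ := hb.2.2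
  have hLn : (m : ℝ) ≤ ‖L‖ := by
    apply ge_of_tendsto (hT.norm)
    exact Eventually.of_forall fun x => hm x
  have hL : L ≠ 0 := by
    intro h; rw [h, norm_zero] at hLn
    exact absurd (le_antisymm hLn m.coe_nonneg) (by exact_mod_cast hm0.ne')
  refine ⟨hb.1.inv₀ bne, ?_, L⁻¹, hT.inv₀ hL, hB.inv₀ hL⟩
  apply bv_le_two (g := b) (h := b) (C := m⁻¹ * m⁻¹) (D := 0) ?_ hb.2.1 hb.2.1
  intro x y
  simp only [zero_mul, add_zero]
  have hx : ‖b x‖₊⁻¹ ≤ m⁻¹ := by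
    rw [inv_le_inv₀ (hm0.trans_le (hm x)) hm0]; exact hm x
  have hy : ‖b y‖₊⁻¹ ≤ m⁻¹ := by
    rw [inv_le_inv₀ (hm0.trans_le (hm y)) hm0]; exact hm y
  calc ‖(b x)⁻¹ - (b y)⁻¹‖₊ = ‖(b y - b x) * (b x)⁻¹ * (b y)⁻¹‖₊ := by
        congr 1
        field_simp [bne x, bne y]
    _ = ‖b x - b y‖₊ * ‖b x‖₊⁻¹ * ‖b y‖₊⁻¹ := by
        rw [nnnorm_mul, nnnorm_mul, nnnorm_inv, nnnorm_inv, show ‖b y - b x‖₊ = ‖b x - b y‖₊ by rw [← neg_sub, nnnorm_neg]]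
    _ ≤ ‖b x - b y‖₊ * m⁻¹ * m⁻¹ :=
        mul_le_mul' (mul_le_mul_right hx _) hy
    _ = m⁻¹ * m⁻¹ * ‖b x - b y‖₊ := by ring
lemma exists_pos_lowerbound {r : ℝ → ℝ} {R R' : ℝ} (hc : Continuous r)
    (hpos : ∀ x, 0 < r x) (ht : Tendsto r atTop (nhds R)) (hb : Tendsto r atBot (nhds R'))
    (hR : 0 < R) (hR' : 0 < R') : ∃ m : ℝ, 0 < m ∧ ∀ x, m ≤ r x := by
  have h1 : ∀ᶠ x in atTop, R / 2 < r x := ht.eventually (eventually_gt_nhds (by linarith))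
  have h2 : ∀ᶠ x in atBot, R' / 2 < r x := hb.eventually (eventually_gt_nhds (by linarith))
  rw [eventually_atTop] at h1
  rw [eventually_atBot] at h2
  obtain ⟨X, hX⟩ := h1
  obtain ⟨Y, hY⟩ := h2
  obtain ⟨z, hz, hzmin⟩ := (isCompact_Icc (a := min Y X) (b := max Y X)).exists_isMinOn
    (Set.nonempty_Icc.2 min_le_max) hc.continuousOn
  refine ⟨min (min (R/2) (R'/2)) (r z), lt_min (lt_min (by linarith) (by linarith)) (hpos z),
    fun x => ?_⟩
  rcases le_or_gt X x with hx | hx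
  · exact le_trans (min_le_left _ _) (le_trans (min_le_left _ _) (hX x hx).le)
  rcases le_or_gt x Y with hy | hy
  · exact le_trans (min_le_left _ _) (le_trans (min_le_right _ _) (hY x hy).le)
  · refine le_trans (min_le_right _ _) (hzmin ?_)
    have hYX : Y ≤ X := le_of_lt (hy.trans hx)
    simp only [Set.mem_Icc]
    constructor
    · exact le_trans (min_le_left _ _) hy.le
    · exact le_trans hx.le (le_max_right _ _)

lemma bv_arctan : BoundedVariationOn Real.arctan Set.univ := by
  apply ne_top_of_le_ne_top (show ENNReal.ofReal (π/2 - -(π/2)) ≠ ⊤ from ENNReal.ofReal_ne_top)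
  apply iSup_le
  rintro ⟨n, ⟨u, hu, -⟩⟩
  have key : ∀ i, edist (Real.arctan (u (i+1))) (Real.arctan (u i))
      = ENNReal.ofReal (Real.arctan (u (i+1)) - Real.arctan (u i)) := by
    intro i
    rw [edist_dist, Real.dist_eq, abs_of_nonneg]
    exact sub_nonneg.2 (Real.arctan_strictMono.monotone (hu (Nat.le_succ i)))
  calc ∑ i ∈ Finset.range n, edist (Real.arctan (u (i+1))) (Real.arctan (u i))
      = ∑ i ∈ Finset.range n, ENNReal.ofReal (Real.arctan (u (i+1)) - Real.arctan (u i)) :=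
        Finset.sum_congr rfl fun i _ => key i
    _ = ENNReal.ofReal (∑ i ∈ Finset.range n, (Real.arctan (u (i+1)) - Real.arctan (u i))) := by
        rw [ENNReal.ofReal_sum_of_nonneg]
        exact fun i _ => sub_nonneg.2 (Real.arctan_strictMono.monotone (hu (Nat.le_succ i)))
    _ = ENNReal.ofReal (Real.arctan (u n) - Real.arctan (u 0)) := by
        rw [Finset.sum_range_sub fun i => Real.arctan (u i)]
    _ ≤ _ := ENNReal.ofReal_le_ofReal (by
        have := Real.arctan_lt_pi_div_two (u n)
        have := Real.neg_pi_div_two_lt_arctan (u 0)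
        linarith)

lemma lip_sin (a b : ℝ) : |Real.sin a - Real.sin b| ≤ |a - b| := by
  rw [Real.sin_sub_sin]
  have h1 : |Real.sin ((a - b)/2)| ≤ |a - b| / 2 := by
    have := Real.abs_sin_le_abs (x := (a - b)/2)
    rwa [abs_div, abs_two] at this
  have h2 : |Real.cos ((a + b)/2)| ≤ 1 := Real.abs_cos_le_one _
  calc |2 * Real.sin ((a - b)/2) * Real.cos ((a + b)/2)|
      = 2 * |Real.sin ((a - b)/2)| * |Real.cos ((a + b)/2)| := by
        rw [abs_mul, abs_mul, abs_two]
    _ ≤ |a - b| := by nlinarith [abs_nonneg (Real.sin ((a-b)/2)), abs_nonneg (a - b)]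

lemma lip_cos (a b : ℝ) : |Real.cos a - Real.cos b| ≤ |a - b| := by
  rw [Real.cos_sub_cos]
  have h1 : |Real.sin ((a - b)/2)| ≤ |a - b| / 2 := by
    have := Real.abs_sin_le_abs (x := (a - b)/2)
    rwa [abs_div, abs_two] at this
  have h2 : |Real.sin ((a + b)/2)| ≤ 1 := Real.abs_sin_le_one _
  calc |(-2) * Real.sin ((a + b)/2) * Real.sin ((a - b)/2)|
      = 2 * |Real.sin ((a + b)/2)| * |Real.sin ((a - b)/2)| := by
        rw [abs_mul, abs_mul, abs_neg, abs_two]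
    _ ≤ |a - b| := by nlinarith [abs_nonneg (Real.sin ((a+b)/2)), abs_nonneg (a - b)]

/-- The auxiliary map `θ ↦ e^{2iθ}` written via real `cos`/`sin`. -/
def Fc : ℝ → ℂ := fun θ => (Real.cos (2*θ) : ℂ) + (Real.sin (2*θ) : ℂ) * Complex.I

lemma lip_F : LipschitzWith 4 Fc := by
  apply LipschitzWith.of_dist_le_mul
  intro a b
  have hle : dist (Fc a) (Fc b)
      ≤ |Real.cos (2*a) - Real.cos (2*b)| + |Real.sin (2*a) - Real.sin (2*b)| := by
    rw [dist_eq_norm]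
    calc ‖Fc a - Fc b‖
        = ‖((Real.cos (2*a) - Real.cos (2*b) : ℝ) : ℂ)
            + ((Real.sin (2*a) - Real.sin (2*b) : ℝ) : ℂ) * Complex.I‖ := by
          congr 1; simp only [Fc]; push_cast; ring
      _ ≤ ‖((Real.cos (2*a) - Real.cos (2*b) : ℝ) : ℂ)‖
            + ‖((Real.sin (2*a) - Real.sin (2*b) : ℝ) : ℂ) * Complex.I‖ := norm_add_le _ _
      _ = |Real.cos (2*a) - Real.cos (2*b)| + |Real.sin (2*a) - Real.sin (2*b)| := by
          rw [norm_mul, Complex.norm_I, mul_one, Complex.norm_real, Complex.norm_real, Real.norm_eq_abs, Real.norm_eq_abs]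
  have hc := lip_cos (2*a) (2*b)
  have hs := lip_sin (2*a) (2*b)
  have h2 : |2*a - 2*b| = 2 * |a - b| := by rw [show 2*a - 2*b = 2*(a-b) by ring, abs_mul, abs_two]
  rw [Real.dist_eq]
  push_cast
  linarith

/-- The separating function `h(x) = e^{2 i arctan x} = (1+ix)/(1-ix)`. -/
def hfun : ℝ → ℂ := fun x => Fc (Real.arctan x)

lemma hfun_tendsto_atTop : Tendsto hfun atTop (nhds (-1)) := by
  have harc : Tendsto Real.arctan atTop (nhds (π/2)) :=
    Real.tendsto_arctan_atTop.mono_right nhdsWithin_le_nhds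
  have hFc : Continuous Fc := by
    apply Continuous.add
    · exact Complex.continuous_ofReal.comp (Real.continuous_cos.comp (by continuity))
    · exact (Complex.continuous_ofReal.comp (Real.continuous_sin.comp (by continuity))).mul
        continuous_const
  have := (hFc.tendsto (π/2)).comp harc
  have hval : Fc (π/2) = -1 := by
    simp only [Fc]
    rw [show 2 * (π/2) = π by ring]
    simp [Real.cos_pi, Real.sin_pi]
  rwa [hval] at this

lemma hfun_tendsto_atBot : Tendsto hfun atBot (nhds (-1)) := by
  have harc : Tendsto Real.arctan atBot (nhds (-(π/2))) :=
    Real.tendsto_arctan_atBot.mono_right nhdsWithin_le_nhds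
  have hFc : Continuous Fc := by
    apply Continuous.add
    · exact Complex.continuous_ofReal.comp (Real.continuous_cos.comp (by continuity))
    · exact (Complex.continuous_ofReal.comp (Real.continuous_sin.comp (by continuity))).mul
        continuous_const
  have := (hFc.tendsto (-(π/2))).comp harc
  have hval : Fc (-(π/2)) = -1 := by
    simp only [Fc]
    rw [show 2 * (-(π/2)) = -π by ring]
    simp [Real.cos_pi, Real.sin_pi]
  rwa [hval] at this

lemma mem_hfun : MemBVCRdot hfun := by
  refine ⟨?_, ?_, -1, hfun_tendsto_atTop, hfun_tendsto_atBot⟩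
  · apply Continuous.comp ?_ Real.continuous_arctan
    apply Continuous.add
    · exact Complex.continuous_ofReal.comp (Real.continuous_cos.comp (by continuity))
    · exact (Complex.continuous_ofReal.comp (Real.continuous_sin.comp (by continuity))).mul
        continuous_const
  · exact (lip_F.lipschitzOnWith (s := Set.univ)).comp_boundedVariationOn
      (Set.mapsTo_univ _ _) bv_arctan
lemma cos_two_arctan (x : ℝ) : Real.cos (2 * Real.arctan x) = (1 - x^2) / (1 + x^2) := by
  have h0 : (0:ℝ) < 1 + x^2 := by positivity
  have hs : Real.sqrt (1 + x^2) ≠ 0 := (Real.sqrt_pos.2 h0).ne'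
  have hsq : Real.sqrt (1 + x^2) ^ 2 = 1 + x^2 := Real.sq_sqrt h0.le
  rw [Real.cos_two_mul, Real.cos_arctan]
  rw [div_pow, one_pow, hsq]
  field_simp
  ring

lemma sin_two_arctan (x : ℝ) : Real.sin (2 * Real.arctan x) = 2 * x / (1 + x^2) := by
  have h0 : (0:ℝ) < 1 + x^2 := by positivity
  have hs : Real.sqrt (1 + x^2) ≠ 0 := (Real.sqrt_pos.2 h0).ne'
  have hsq : Real.sqrt (1 + x^2) * Real.sqrt (1 + x^2) = 1 + x^2 :=
    Real.mul_self_sqrt h0.le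
  rw [Real.sin_two_mul, Real.sin_arctan, Real.cos_arctan]
  field_simp
  rw [Real.sq_sqrt h0.le]

lemma hfun_re (x : ℝ) : (hfun x).re = (1 - x^2) / (1 + x^2) := by
  simp only [hfun, Fc, Complex.add_re, Complex.ofReal_re, Complex.mul_re, Complex.I_re,
    Complex.I_im, Complex.ofReal_im, mul_zero, mul_one, zero_sub, zero_mul, add_zero, sub_zero]
  rw [cos_two_arctan]

lemma hfun_im (x : ℝ) : (hfun x).im = 2 * x / (1 + x^2) := by
  simp only [hfun, Fc, Complex.add_im, Complex.ofReal_im, Complex.mul_im, Complex.I_re,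
    Complex.I_im, Complex.ofReal_re, mul_zero, mul_one, zero_mul, add_zero, zero_add]
  exact sin_two_arctan x

lemma hfun_inj {x y : ℝ} (h : hfun x = hfun y) : x = y := by
  have h0x : (0:ℝ) < 1 + x^2 := by positivity
  have h0y : (0:ℝ) < 1 + y^2 := by positivity
  have hre : (1 - x^2) / (1 + x^2) = (1 - y^2) / (1 + y^2) := by
    rw [← hfun_re, ← hfun_re, h]
  have him : 2 * x / (1 + x^2) = 2 * y / (1 + y^2) := by
    rw [← hfun_im, ← hfun_im, h]
  rw [div_eq_div_iff h0x.ne' h0y.ne'] at hre him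
  have hsq : (x - y) * (x + y) = 0 := by linear_combination (-(1:ℝ)/2) * hre
  have hxy : (x - y) * (1 - x * y) = 0 := by linear_combination (1/2 : ℝ) * him
  rcases mul_eq_zero.1 hsq with h1 | h1
  · linarith [sub_eq_zero.1 h1]
  · rcases mul_eq_zero.1 hxy with h2 | h2
    · linarith [sub_eq_zero.1 h2]
    · -- x + y = 0 and x*y = 1, impossible
      have hy : y = -x := by linarith
      rw [hy] at h2
      nlinarith [sq_nonneg x]

lemma hfun_ne_neg_one (x : ℝ) : hfun x ≠ -1 := by
  intro h
  have := congrArg Complex.re h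
  rw [hfun_re] at this
  simp only [Complex.neg_re, Complex.one_re] at this
  have h0 : (0:ℝ) < 1 + x^2 := by positivity
  rw [div_eq_iff h0.ne'] at this
  nlinarith
lemma char_contra (φ : (ℝ → ℂ) → ℂ)
    (hone : φ (fun _ => (1 : ℂ)) = 1)
    (hadd : ∀ a b : ℝ → ℂ, MemBVCRdot a → MemBVCRdot b → φ (a + b) = φ a + φ b)
    (hmul : ∀ a b : ℝ → ℂ, MemBVCRdot a → MemBVCRdot b → φ (a * b) = φ a * φ b)
    {p u : ℝ → ℂ} (hp : MemBVCRdot p) (hu : MemBVCRdot u)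
    (hφp : φ p = 0) (hφu : φ u = 0)
    {m : ℝ} (hm0 : 0 < m)
    (hm : ∀ x, m ≤ Complex.normSq (p x) + Complex.normSq (u x)) : False := by
  set q : ℝ → ℂ := fun x => conj (p x) with hq
  set v : ℝ → ℂ := fun x => conj (u x) with hv
  have hqmem : MemBVCRdot q := mem_conj hp
  have hvmem : MemBVCRdot v := mem_conj hu
  have hbmem : MemBVCRdot (p * q + u * v) := mem_add (mem_mul hp hqmem) (mem_mul hu hvmem)
  have hbx : ∀ x, (p * q + u * v) x
      = ((Complex.normSq (p x) + Complex.normSq (u x) : ℝ) : ℂ) := by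
    intro x
    simp only [Pi.add_apply, Pi.mul_apply, hq, hv, Complex.mul_conj, Complex.ofReal_add]
  have h0 : (0:ℝ≥0) < m.toNNReal := Real.toNNReal_pos.2 hm0
  have hnorm : ∀ x, m.toNNReal ≤ ‖(p * q + u * v) x‖₊ := by
    intro x
    rw [hbx x, Complex.nnnorm_real, Real.nnnorm_of_nonneg (le_trans hm0.le (hm x)),
      ← Real.toNNReal_of_nonneg (le_trans hm0.le (hm x))]
    exact Real.toNNReal_mono (hm x)
  have bne : ∀ x, (p * q + u * v) x ≠ 0 := by
    intro x hx
    have := hnorm x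
    rw [hx, nnnorm_zero] at this
    exact absurd this h0.not_ge
  have hinv : MemBVCRdot (fun x => ((p * q + u * v) x)⁻¹) := mem_inv hbmem h0 hnorm
  have hmulinv : (p * q + u * v) * (fun x => ((p * q + u * v) x)⁻¹) = (fun _ => (1:ℂ)) := by
    funext x
    exact mul_inv_cancel₀ (bne x)
  have h1 : φ ((p * q + u * v) * (fun x => ((p * q + u * v) x)⁻¹))
      = φ (p * q + u * v) * φ (fun x => ((p * q + u * v) x)⁻¹) := hmul _ _ hbmem hinv
  have hφb : φ (p * q + u * v) = 0 := by
    rw [hadd _ _ (mem_mul hp hqmem) (mem_mul hu hvmem), hmul _ _ hp hqmem,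
      hmul _ _ hu hvmem, hφp, hφu]
    ring
  rw [hmulinv, hone, hφb, zero_mul] at h1
  exact one_ne_zero h1

lemma main_contra (φ : (ℝ → ℂ) → ℂ)
    (hone : φ (fun _ => (1 : ℂ)) = 1)
    (hadd : ∀ a b : ℝ → ℂ, MemBVCRdot a → MemBVCRdot b → φ (a + b) = φ a + φ b)
    (hmul : ∀ a b : ℝ → ℂ, MemBVCRdot a → MemBVCRdot b → φ (a * b) = φ a * φ b)
    (hsmul : ∀ (c : ℂ) (a : ℝ → ℂ), MemBVCRdot a → φ (c • a) = c * φ a)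
    {t c L : ℂ} {a : ℝ → ℂ}
    (ha : MemBVCRdot a) (hφh : φ hfun = t) (hφa : φ a = c)
    (haT : Tendsto a atTop (nhds L)) (haB : Tendsto a atBot (nhds L))
    (hsep : ∀ x, hfun x = t → a x ≠ c) (hR : ¬(t = -1 ∧ L = c)) : False := by
  set p : ℝ → ℂ := hfun + (-t) • (fun _ => (1:ℂ)) with hpdef
  set u : ℝ → ℂ := a + (-c) • (fun _ => (1:ℂ)) with hudef
  have hconst : ∀ z : ℂ, ((-z) • (fun _ => (1:ℂ)) : ℝ → ℂ) = (fun _ : ℝ => -z) := by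
    intro z; funext x; simp
  have hmemt : MemBVCRdot ((-t) • (fun _ : ℝ => (1:ℂ))) := by
    rw [hconst]; exact mem_const _
  have hmemc : MemBVCRdot ((-c) • (fun _ : ℝ => (1:ℂ))) := by
    rw [hconst]; exact mem_const _
  have hp : MemBVCRdot p := mem_add mem_hfun hmemt
  have hu : MemBVCRdot u := mem_add ha hmemc
  have hφp : φ p = 0 := by
    rw [hpdef, hadd _ _ mem_hfun hmemt, hsmul (-t) _ (mem_const 1), hone, hφh]
    ring
  have hφu : φ u = 0 := by
    rw [hudef, hadd _ _ ha hmemc, hsmul (-c) _ (mem_const 1), hone, hφa]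
    ring
  have hpx : ∀ x, p x = hfun x - t := by
    intro x
    simp only [hpdef, Pi.add_apply, Pi.smul_apply, smul_eq_mul, mul_one]
    ring
  have hux : ∀ x, u x = a x - c := by
    intro x
    simp only [hudef, Pi.add_apply, Pi.smul_apply, smul_eq_mul, mul_one]
    ring
  set r : ℝ → ℝ := fun x => Complex.normSq (hfun x - t) + Complex.normSq (a x - c) with hrdef
  have hrc : Continuous r := by
    apply Continuous.add
    · exact Complex.continuous_normSq.comp (mem_hfun.1.sub continuous_const)
    · exact Complex.continuous_normSq.comp (ha.1.sub continuous_const)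
  have hrpos : ∀ x, 0 < r x := by
    intro x
    rcases eq_or_ne (hfun x) t with hx | hx
    · have h2 : 0 < Complex.normSq (a x - c) :=
        Complex.normSq_pos.2 (sub_ne_zero.2 (hsep x hx))
      have h1 : 0 ≤ Complex.normSq (hfun x - t) := Complex.normSq_nonneg _
      simp only [hrdef]; linarith
    · have h1 : 0 < Complex.normSq (hfun x - t) := Complex.normSq_pos.2 (sub_ne_zero.2 hx)
      have h2 : 0 ≤ Complex.normSq (a x - c) := Complex.normSq_nonneg _
      simp only [hrdef]; linarith
  set R : ℝ := Complex.normSq (-1 - t) + Complex.normSq (L - c) with hRdef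
  have hrT : Tendsto r atTop (nhds R) := by
    have h1 := (Complex.continuous_normSq.tendsto (-1 - t)).comp
      (hfun_tendsto_atTop.sub (tendsto_const_nhds (x := t)))
    have h2 := (Complex.continuous_normSq.tendsto (L - c)).comp
      (haT.sub (tendsto_const_nhds (x := c)))
    exact h1.add h2
  have hrB : Tendsto r atBot (nhds R) := by
    have h1 := (Complex.continuous_normSq.tendsto (-1 - t)).comp
      (hfun_tendsto_atBot.sub (tendsto_const_nhds (x := t)))
    have h2 := (Complex.continuous_normSq.tendsto (L - c)).comp
      (haB.sub (tendsto_const_nhds (x := c)))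
    exact h1.add h2
  have hRpos : 0 < R := by
    by_cases ht1 : t = -1
    · have hLc : L ≠ c := fun h => hR ⟨ht1, h⟩
      have h2 : 0 < Complex.normSq (L - c) := Complex.normSq_pos.2 (sub_ne_zero.2 hLc)
      have h1 : 0 ≤ Complex.normSq (-1 - t) := Complex.normSq_nonneg _
      simp only [hRdef]; linarith
    · have h1 : 0 < Complex.normSq (-1 - t) := by
        apply Complex.normSq_pos.2
        intro h
        exact ht1 (by linear_combination -h)
      have h2 : 0 ≤ Complex.normSq (L - c) := Complex.normSq_nonneg _
      simp only [hRdef]; linarith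
  obtain ⟨m, hm0, hm⟩ := exists_pos_lowerbound hrc hrpos hrT hrB hRpos hRpos
  apply char_contra φ hone hadd hmul hp hu hφp hφu hm0
  intro x
  rw [hpx x, hux x]
  exact hm x
end BVchar

/-- Every bounded unital `ℂ`-algebra homomorphism (character) `φ` of the Banach algebra
`A = BV(ℝ) ∩ C(Ṙ)` (with norm `‖a‖ = sup|a| + V(a)`) is an evaluation functional: either
there is `x₀ ∈ ℝ` with `φ(a) = a(x₀)` for all `a ∈ A`, or `φ(a) = lim_{x→+∞} a(x)`
for all `a ∈ A`, i.e. `φ = δ_x` for some `x` in `Ṙ = ℝ ∪ {∞}`. -/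
theorem character_of_BV_inter_CRdot_is_evaluation
    (φ : (ℝ → ℂ) → ℂ)
    (hone : φ (fun _ => (1 : ℂ)) = 1)
    (hadd : ∀ a b : ℝ → ℂ, MemBVCRdot a → MemBVCRdot b → φ (a + b) = φ a + φ b)
    (hmul : ∀ a b : ℝ → ℂ, MemBVCRdot a → MemBVCRdot b → φ (a * b) = φ a * φ b)
    (hsmul : ∀ (c : ℂ) (a : ℝ → ℂ), MemBVCRdot a → φ (c • a) = c * φ a)
    (hbdd : ∃ C : ℝ, 0 < C ∧ ∀ a : ℝ → ℂ, MemBVCRdot a → ‖φ a‖ ≤ C * bvNorm a) :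
    (∃ x₀ : ℝ, ∀ a : ℝ → ℂ, MemBVCRdot a → φ a = a x₀) ∨
    (∀ (a : ℝ → ℂ) (L : ℂ), MemBVCRdot a → Tendsto a atTop (nhds L) → φ a = L) := by
  classical
  set t : ℂ := φ BVchar.hfun with ht
  have hφh : φ BVchar.hfun = t := rfl
  have hspec : (∃ x₀ : ℝ, BVchar.hfun x₀ = t) ∨ t = -1 := by
    by_contra hcon
    push_neg at hcon
    obtain ⟨h1, h2⟩ := hcon
    exact BVchar.main_contra φ hone hadd hmul hsmul BVchar.mem_hfun hφh hφh
      BVchar.hfun_tendsto_atTop BVchar.hfun_tendsto_atBot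
      (fun x hx => absurd hx (h1 x)) (fun h => h2 h.1)
  rcases hspec with ⟨x₀, hx₀⟩ | ht1
  · refine Or.inl ⟨x₀, fun a ha => ?_⟩
    by_contra hc
    obtain ⟨L, hT, hB⟩ := ha.2.2
    refine BVchar.main_contra φ hone hadd hmul hsmul ha hφh rfl hT hB ?_ ?_
    · intro x hx
      have hxx : x = x₀ := BVchar.hfun_inj (hx.trans hx₀.symm)
      rw [hxx]
      exact fun heq => hc heq.symm
    · rintro ⟨hh1, -⟩
      exact BVchar.hfun_ne_neg_one x₀ (hx₀.trans hh1)
  · refine Or.inr fun a L ha haL => ?_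
    obtain ⟨L', hT, hB⟩ := ha.2.2
    have hLL : L = L' := tendsto_nhds_unique haL hT
    subst hLL
    by_contra hc
    refine BVchar.main_contra φ hone hadd hmul hsmul ha hφh rfl hT hB ?_ ?_
    · intro x hx
      exact absurd (hx.trans ht1) (BVchar.hfun_ne_neg_one x)
    · rintro ⟨-, hh2⟩
      exact hc hh2.symm
end
end

section
/- Let κ ∈ ℤ and let b : ℝ → ℂ satisfy 0 < m ≤ |b(ξ)| ≤ M for all ξ ∈ ℝ (for some constants m, M). For t ∈ [0, 1] define h_t : ℝ → ℂ by h_t(ξ) := (r_{−κ}(ξ)·b(ξ))^t · r_κ(ξ), where z^t denotes the principal power. Then the map t ↦ h_t is continuous from [0, 1] into the bounded functions on ℝ with the supremum norm; that is, for every t₀ ∈ [0, 1], sup_{ξ∈ℝ} |h_t(ξ) − h_{t₀}(ξ)| → 0 as t → t₀ within [0, 1]. -/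
open Filter

noncomputable section

/-- The rational symbol `r_m(ξ) = ((ξ − i)/(ξ + i))^m` for `m : ℤ`. -/
def rsym (m : ℤ) (ξ : ℝ) : ℂ := (((ξ : ℂ) - Complex.I) / ((ξ : ℂ) + Complex.I)) ^ m

lemma abs_rsym (n : ℤ) (ξ : ℝ) : ‖rsym n ξ‖ = 1 := by
  have h2 : ((ξ : ℂ) + Complex.I) ≠ 0 := by
    intro hz
    have := congrArg Complex.im hz
    simp at this
  have h1 : ‖(ξ : ℂ) - Complex.I‖ = ‖(ξ : ℂ) + Complex.I‖ := by
    rw [← Complex.norm_conj ((ξ : ℂ) - Complex.I)]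
    simp [map_sub, Complex.conj_I]
  rw [rsym, norm_zpow, norm_div, h1, div_self (norm_ne_zero_iff.mpr h2), one_zpow]

lemma exp_diff_bound (w : ℂ) (C : ℝ) (hw : ‖w‖ ≤ C)
    (t t₀ : ℝ) (ht₀ : t₀ ∈ Set.Icc (0:ℝ) 1) (hd : |t - t₀| * C ≤ 1) :
    ‖Complex.exp ((t:ℂ) * w) - Complex.exp ((t₀:ℂ) * w)‖
      ≤ Real.exp C * (2 * (|t - t₀| * C)) := by
  have habs : ‖((t:ℂ) - t₀) * w‖ ≤ |t - t₀| * C := by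
    rw [norm_mul]
    have : ‖(t:ℂ) - t₀‖ = |t - t₀| := by
      rw [← Complex.ofReal_sub, Complex.norm_real, Real.norm_eq_abs]
    rw [this]
    exact mul_le_mul_of_nonneg_left hw (abs_nonneg _)
  have key : ‖Complex.exp (((t:ℂ) - t₀) * w) - 1‖ ≤ 2 * (|t - t₀| * C) := by
    calc ‖Complex.exp (((t:ℂ) - t₀) * w) - 1‖
        ≤ 2 * ‖((t:ℂ) - t₀) * w‖ :=
          Complex.norm_exp_sub_one_le (le_trans habs hd)
      _ ≤ 2 * (|t - t₀| * C) := by linarith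
  have hsplit : (t:ℂ) * w = (t₀:ℂ) * w + ((t:ℂ) - t₀) * w := by ring
  have hexp₀ : ‖Complex.exp ((t₀:ℂ) * w)‖ ≤ Real.exp C := by
    rw [Complex.norm_exp]
    apply Real.exp_le_exp.2
    have : ((t₀:ℂ) * w).re = t₀ * w.re := by simp
    rw [this]
    calc t₀ * w.re ≤ |t₀ * w.re| := le_abs_self _
      _ = |t₀| * |w.re| := abs_mul _ _
      _ ≤ 1 * ‖w‖ := by
          apply mul_le_mul (abs_le.2 ⟨by linarith [ht₀.1], ht₀.2⟩)
            (Complex.abs_re_le_norm w) (abs_nonneg _) zero_le_one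
      _ ≤ C := by linarith
  calc ‖Complex.exp ((t:ℂ) * w) - Complex.exp ((t₀:ℂ) * w)‖
      = ‖Complex.exp ((t₀:ℂ) * w)‖ *
        ‖Complex.exp (((t:ℂ) - t₀) * w) - 1‖ := by
        rw [hsplit, Complex.exp_add, ← norm_mul]
        ring_nf
    _ ≤ Real.exp C * (2 * (|t - t₀| * C)) :=
        mul_le_mul hexp₀ key (norm_nonneg _) (Real.exp_nonneg _)

/-- Let `κ ∈ ℤ` and let `b : ℝ → ℂ` satisfy `0 < m ≤ |b(ξ)| ≤ M` for all `ξ`. For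
`t ∈ [0, 1]` let `h_t(ξ) = (r_{−κ}(ξ)·b(ξ))^t · r_κ(ξ)`, where `z^t = exp(t·Log z)`
is the principal power. Then `t ↦ h_t` is continuous into the bounded functions with
the supremum norm: for every `t₀ ∈ [0, 1]`,
`sup_{ξ∈ℝ} |h_t(ξ) − h_{t₀}(ξ)| → 0` as `t → t₀` within `[0, 1]`. -/
theorem homotopy_sup_norm_continuous
    (κ : ℤ) (b : ℝ → ℂ) (m M : ℝ) (hm : 0 < m)
    (hb : ∀ ξ : ℝ, m ≤ ‖b ξ‖ ∧ ‖b ξ‖ ≤ M)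
    (h : ℝ → ℝ → ℂ)
    (hh : ∀ (t : ℝ) (ξ : ℝ),
      h t ξ = Complex.exp ((t : ℂ) * Complex.log (rsym (-κ) ξ * b ξ)) * rsym κ ξ)
    (t₀ : ℝ) (ht₀ : t₀ ∈ Set.Icc (0 : ℝ) 1) :
    Tendsto (fun t : ℝ => ⨆ ξ : ℝ, ‖h t ξ - h t₀ ξ‖)
      (nhdsWithin t₀ (Set.Icc (0 : ℝ) 1)) (nhds 0) := by
  set C : ℝ := |Real.log m| + |Real.log M| + Real.pi with hC
  have hCpos : 0 < C := by
    have := Real.pi_pos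
    positivity
  -- bound on the logarithm
  have hlog : ∀ ξ : ℝ, ‖Complex.log (rsym (-κ) ξ * b ξ)‖ ≤ C := by
    intro ξ
    set z := rsym (-κ) ξ * b ξ with hz
    have habz : ‖z‖ = ‖b ξ‖ := by
      rw [hz, norm_mul, abs_rsym, one_mul]
    have hmz : m ≤ ‖z‖ := habz ▸ (hb ξ).1
    have hMz : ‖z‖ ≤ M := habz ▸ (hb ξ).2
    have hlm : Real.log m ≤ Real.log (‖z‖) := Real.log_le_log hm hmz
    have hlM : Real.log (‖z‖) ≤ Real.log M :=
      Real.log_le_log (lt_of_lt_of_le hm hmz) hMz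
    calc ‖Complex.log z‖
        ≤ |(Complex.log z).re| + |(Complex.log z).im| := Complex.norm_le_abs_re_add_abs_im _
      _ ≤ C := by
          rw [Complex.log_re, Complex.log_im]
          have h1 : |Real.log (‖z‖)| ≤ |Real.log m| + |Real.log M| := by
            rw [abs_le]
            constructor
            · linarith [neg_abs_le (Real.log m), abs_nonneg (Real.log M)]
            · linarith [le_abs_self (Real.log M), abs_nonneg (Real.log m)]
          have h2 := Complex.abs_arg_le_pi z
          rw [hC]; linarith
  set K : ℝ := Real.exp C * (2 * C) with hK
  have hKpos : 0 < K := by positivity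
  -- pointwise bound
  have hpt : ∀ t ∈ Set.Icc (0:ℝ) 1, |t - t₀| * C ≤ 1 → ∀ ξ : ℝ,
      ‖h t ξ - h t₀ ξ‖ ≤ K * |t - t₀| := by
    intro t ht hd ξ
    rw [hh t ξ, hh t₀ ξ, ← sub_mul, norm_mul, abs_rsym, mul_one]
    calc ‖Complex.exp ((t:ℂ) * Complex.log (rsym (-κ) ξ * b ξ)) -
          Complex.exp ((t₀:ℂ) * Complex.log (rsym (-κ) ξ * b ξ))‖
        ≤ Real.exp C * (2 * (|t - t₀| * C)) :=
          exp_diff_bound _ C (hlog ξ) t t₀ ht₀ hd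
      _ = K * |t - t₀| := by rw [hK]; ring
  -- squeeze
  have hev : ∀ᶠ t in nhdsWithin t₀ (Set.Icc (0:ℝ) 1),
      (⨆ ξ : ℝ, ‖h t ξ - h t₀ ξ‖) ≤ K * |t - t₀| := by
    have h1 : ∀ᶠ t in nhdsWithin t₀ (Set.Icc (0:ℝ) 1), |t - t₀| * C ≤ 1 := by
      have : ∀ᶠ t in nhds t₀, |t - t₀| * C ≤ 1 := by
        have hcont : Tendsto (fun t : ℝ => |t - t₀| * C) (nhds t₀) (nhds (|t₀ - t₀| * C)) :=
          (Continuous.mul (continuous_abs.comp (continuous_id.sub continuous_const))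
            continuous_const).tendsto t₀
        simp only [sub_self, abs_zero, zero_mul] at hcont
        exact hcont.eventually_le_const (by norm_num)
      exact this.filter_mono nhdsWithin_le_nhds
    filter_upwards [h1, self_mem_nhdsWithin] with t hd ht
    exact ciSup_le (hpt t ht hd)
  have hnn : ∀ᶠ t in nhdsWithin t₀ (Set.Icc (0:ℝ) 1),
      0 ≤ ⨆ ξ : ℝ, ‖h t ξ - h t₀ ξ‖ := by
    filter_upwards with t
    exact Real.iSup_nonneg (fun ξ => norm_nonneg _)
  have hlim : Tendsto (fun t : ℝ => K * |t - t₀|) (nhdsWithin t₀ (Set.Icc (0:ℝ) 1)) (nhds 0) := by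
    have : Tendsto (fun t : ℝ => K * |t - t₀|) (nhds t₀) (nhds (K * |t₀ - t₀|)) :=
      (continuous_const.mul (continuous_abs.comp (continuous_id.sub continuous_const))).tendsto t₀
    simp only [sub_self, abs_zero, mul_zero] at this
    exact this.mono_left nhdsWithin_le_nhds
  exact squeeze_zero' hnn hev hlim
end
end
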